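/- The function f : ℝ³ → ℝ given by f(x, y, z) = x² + z² + x² y² is not convex on the open positive orthant ℝ₊ × ℝ₊ × ℝ₊. Concretely, the determinant of its Hessian equals 8x²(1 − 3y²), which is negative whenever x > 0 and y > 1/√3, so the Hessian has a negative eigenvalue at such points. -/
import Mathlib


/-- The function `f(x, y, z) = x² + z² + x²y²` is not convex on the open
positive orthant; concretely, its Hessian has determinant `8x²(1 − 3y²)`, which is negative
whenever `x > 0` and `y > 1/√3`, so the Hessian has a negative eigenvalue at such points. -/
theorem nonconvexity_of_nonstandardized_energy :
    ¬ ConvexOn ℝ {p : ℝ × ℝ × ℝ | 0 < p.1 ∧ 0 < p.2.1 ∧ 0 < p.2.2}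
        (fun p : ℝ × ℝ × ℝ => p.1 ^ 2 + p.2.2 ^ 2 + p.1 ^ 2 * p.2.1 ^ 2) ∧
      (∀ x y : ℝ,
        (Matrix.of ![![2 + 2 * y ^ 2, 4 * x * y, 0],
                     ![4 * x * y, 2 * x ^ 2, 0],
                     ![0, 0, 2]] : Matrix (Fin 3) (Fin 3) ℝ).det
          = 8 * x ^ 2 * (1 - 3 * y ^ 2)) ∧
      (∀ x y : ℝ, 0 < x → 1 / Real.sqrt 3 < y →
        ∃ t : ℝ, t < 0 ∧
          Module.End.HasEigenvalue
            (Matrix.toLin' (Matrix.of ![![2 + 2 * y ^ 2, 4 * x * y, 0],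
                                        ![4 * x * y, 2 * x ^ 2, 0],
                                        ![0, 0, 2]] : Matrix (Fin 3) (Fin 3) ℝ)) t) := by
  refine ⟨?_, ?_, ?_⟩
  · intro hc
    have ha : ((2:ℝ), (1:ℝ), (1:ℝ)) ∈ {p : ℝ × ℝ × ℝ | 0 < p.1 ∧ 0 < p.2.1 ∧ 0 < p.2.2} := by
      norm_num
    have hb : ((1:ℝ), (3:ℝ), (1:ℝ)) ∈ {p : ℝ × ℝ × ℝ | 0 < p.1 ∧ 0 < p.2.1 ∧ 0 < p.2.2} := by
      norm_num
    have := hc.2 ha hb (by norm_num : (0:ℝ) ≤ 1/2) (by norm_num : (0:ℝ) ≤ 1/2)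
      (by norm_num : (1/2:ℝ) + 1/2 = 1)
    simp only [Prod.smul_mk, Prod.mk_add_mk, smul_eq_mul] at this
    norm_num at this
  · intro x y
    simp [Matrix.det_fin_three]
    ring
  · intro x y hx hy
    have hs3 : (0:ℝ) < Real.sqrt 3 := Real.sqrt_pos.2 (by norm_num)
    have hy0 : 0 < y := lt_trans (by positivity) hy
    have hy2 : 1/3 < y ^ 2 := by
      have h1 : (1 / Real.sqrt 3) ^ 2 < y ^ 2 := by
        exact pow_lt_pow_left₀ hy (by positivity) (by norm_num)
      have : (1 / Real.sqrt 3) ^ 2 = 1/3 := by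
        rw [div_pow, one_pow, Real.sq_sqrt (by norm_num : (3:ℝ) ≥ 0)]
      linarith [h1, this.symm.le]
    set a : ℝ := 2 + 2 * y ^ 2 with ha
    set b : ℝ := 4 * x * y with hb
    set d : ℝ := 2 * x ^ 2 with hd
    have hdet : a * d - b ^ 2 < 0 := by
      have : a * d - b ^ 2 = 4 * x ^ 2 * (1 - 3 * y ^ 2) := by rw [ha, hb, hd]; ring
      rw [this]
      have h1 : 1 - 3 * y ^ 2 < 0 := by linarith
      exact mul_neg_of_pos_of_neg (by positivity) h1
    set D : ℝ := (a - d) ^ 2 + 4 * b ^ 2 with hD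
    have hDnn : 0 ≤ D := by positivity
    have hsq : Real.sqrt D ^ 2 = D := Real.sq_sqrt hDnn
    have had : 0 < a + d := by rw [ha, hd]; positivity
    have hlt : a + d < Real.sqrt D := by
      have h1 : (a + d) ^ 2 < D := by rw [hD]; nlinarith
      calc a + d = Real.sqrt ((a + d) ^ 2) := (Real.sqrt_sq had.le).symm
        _ < Real.sqrt D := Real.sqrt_lt_sqrt (by positivity) h1
    set t : ℝ := (a + d - Real.sqrt D) / 2 with ht
    have htneg : t < 0 := by rw [ht]; linarith
    have key : t ^ 2 - (a + d) * t + (a * d - b ^ 2) = 0 := by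
      rw [ht, hD] at *
      nlinarith [hsq]
    clear_value t
    refine ⟨t, htneg, ?_⟩
    have hbne : b ≠ 0 := by rw [hb]; positivity
    apply Module.End.hasEigenvalue_of_hasEigenvector (x := ![b, t - a, 0])
    constructor
    · rw [Module.End.mem_eigenspace_iff, Matrix.toLin'_apply]
      funext i
      fin_cases i <;>
        simp [Matrix.mulVec, dotProduct, Fin.sum_univ_three] <;>
        first | ring1 | linear_combination -key
    · intro h
      have : (![b, t - a, 0] : Fin 3 → ℝ) 0 = 0 := by rw [h]; rfl
      simp at this
      exact hbne this
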